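/- arXiv:math/0406519 — 3 statements merged into one kernel-verified Lean document; each statement's English description precedes it below -/
import Mathlib

section
/- Under the random effects mixture model, for every fixed t > 0, the expected False Discovery Proportion satisfies E[Γ(t)] = Q(t)·(1 − (1 − G(t))^m), and the expected False Nondiscovery Proportion satisfies E[Ξ(t)] = Q̃(t)·(1 − G(t)^m). -/
open MeasureTheory ProbabilityTheory Filter
open scoped ENNReal NNReal Topology Classical

noncomputable section

/-- Real-valued indicator of a proposition. -/
def ind (p : Prop) : ℝ := if p then 1 else 0

/-- `F` is the CDF of a distribution on `[0,1]` that stochastically dominates `Uniform(0,1)`. -/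
def IsPvalueCDF (F : ℝ → ℝ) : Prop :=
  Monotone F ∧ (∀ t ≤ (0 : ℝ), F t = 0) ∧ (∀ t, (1 : ℝ) ≤ t → F t = 1) ∧
    ∀ t ∈ Set.Icc (0 : ℝ) 1, t ≤ F t

/-- CDF of the uniform distribution on `[0,1]`. -/
def Ucdf (t : ℝ) : ℝ := max 0 (min t 1)

/-- Marginal CDF of the p-values: `G = (1-a)U + aF`. -/
def Gmix (a : ℝ) (F : ℝ → ℝ) (t : ℝ) : ℝ := (1 - a) * Ucdf t + a * F t

/-- The FDP (false discovery proportion) process. -/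
def FDP (m : ℕ) (H P : ℕ → ℝ) (t : ℝ) : ℝ :=
  (∑ i ∈ Finset.range m, ind (P i ≤ t) * (1 - H i)) /
    ((∑ i ∈ Finset.range m, ind (P i ≤ t)) + ind (∀ i ∈ Finset.range m, t < P i))

/-- The FNP (false nondiscovery proportion) process. -/
def FNP (m : ℕ) (H P : ℕ → ℝ) (t : ℝ) : ℝ :=
  (∑ i ∈ Finset.range m, ind (t < P i) * H i) /
    ((∑ i ∈ Finset.range m, ind (t < P i)) + ind (∀ i ∈ Finset.range m, P i ≤ t))

/-- Empirical CDF of the first `m` p-values. -/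
def ecdf (m : ℕ) (P : ℕ → ℝ) (t : ℝ) : ℝ := (∑ i ∈ Finset.range m, ind (P i ≤ t)) / m

/-- The random-effects (mixture) model for multiple testing: the pairs `(H i, P i)` are
i.i.d., `H i ~ Bernoulli(a)`, `P i | H i = 0 ~ Uniform(0,1)` and `P i | H i = 1 ~ F`. -/
def RandomEffectsModel {Ω : Type*} [MeasurableSpace Ω] (Pr : Measure Ω)
    (H P : ℕ → Ω → ℝ) (a : ℝ) (F : ℝ → ℝ) : Prop :=
  (∀ i, Measurable (H i)) ∧ (∀ i, Measurable (P i)) ∧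
  (∀ i ω, H i ω = 0 ∨ H i ω = 1) ∧
  (∀ i ω, P i ω ∈ Set.Icc (0 : ℝ) 1) ∧
  iIndepFun (fun i ω => (H i ω, P i ω)) Pr ∧
  (∀ i j, IdentDistrib (fun ω => (H i ω, P i ω)) (fun ω => (H j ω, P j ω)) Pr Pr) ∧
  (∀ i, Pr {ω | H i ω = 1} = ENNReal.ofReal a) ∧
  (∀ i, ∀ t ∈ Set.Icc (0 : ℝ) 1,
    Pr {ω | H i ω = 0 ∧ P i ω ≤ t} = ENNReal.ofReal ((1 - a) * t)) ∧
  (∀ i, ∀ t ∈ Set.Icc (0 : ℝ) 1,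
    Pr {ω | H i ω = 1 ∧ P i ω ≤ t} = ENNReal.ofReal (a * F t))

/-- The i.i.d. p-value model: `P i` are i.i.d. with marginal CDF `G = (1-a)U + aF`. -/
def PvalueModel {Ω : Type*} [MeasurableSpace Ω] (Pr : Measure Ω)
    (P : ℕ → Ω → ℝ) (a : ℝ) (F : ℝ → ℝ) : Prop :=
  (∀ i, Measurable (P i)) ∧
  iIndepFun P Pr ∧
  (∀ i t, Pr {ω | P i ω ≤ t} = ENNReal.ofReal (Gmix a F t))

/-- The set `O_F` of admissible mixing proportions for `F`. -/
def OSet (F : ℝ → ℝ) : Set ℝ :=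
  {b | b ∈ Set.Icc (0 : ℝ) 1 ∧
    ∃ Hc : ℝ → ℝ, IsPvalueCDF Hc ∧ ∀ t, F t = (1 - b) * Ucdf t + b * Hc t}

/-- `ζ_F = inf {b : (b, H) ∈ O_F}`. -/
def zeta (F : ℝ → ℝ) : ℝ := sInf (OSet F)

/-- Convergence in probability to a constant. -/
def TendstoInProb {Ω : Type*} [MeasurableSpace Ω] (Pr : Measure Ω)
    (X : ℕ → Ω → ℝ) (c : ℝ) : Prop :=
  ∀ ε : ℝ, 0 < ε → Tendsto (fun m => Pr {ω | ε < |X m ω - c|}) atTop (𝓝 0)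

/-- Convergence in distribution of real random variables to a limiting law `μ`. -/
def ConvInDist {Ω : Type*} [MeasurableSpace Ω] (Pr : Measure Ω)
    (X : ℕ → Ω → ℝ) (μ : Measure ℝ) : Prop :=
  ∀ f : BoundedContinuousFunction ℝ ℝ,
    Tendsto (fun m => ∫ ω, f (X m ω) ∂Pr) atTop (𝓝 (∫ x, f x ∂μ))

/-- Supremum distance between two functions over `[0,1]`. -/
def supDist (f g : ℝ → ℝ) : ℝ := sSup ((fun t => |f t - g t|) '' Set.Icc (0 : ℝ) 1)

/-- The Dvoretzky–Kiefer–Wolfowitz radius `ε_m(α)`. -/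
def dkwEps (m : ℕ) (α : ℝ) : ℝ := Real.sqrt (Real.log (2 / α) / (2 * m))

open Finset

lemma sum_powerset_card {α : Type*} (s : Finset α) (g : ℕ → ℝ) :
    ∑ A ∈ s.powerset, g A.card = ∑ k ∈ range (s.card + 1), (s.card.choose k : ℝ) * g k := by
  rw [Finset.sum_powerset]
  refine Finset.sum_congr rfl fun k _ => ?_
  rw [Finset.sum_congr rfl (fun A hA => by rw [(Finset.mem_powersetCard.1 hA).2]),
    Finset.sum_const, Finset.card_powersetCard, nsmul_eq_mul]

lemma sum_ind_card {α : Type*} [Fintype α] (pred : α → Prop) :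
    ∑ i, ind (pred i) = ((Finset.univ.filter pred).card : ℝ) := by
  simp [ind, Finset.sum_boole]

lemma binom_deriv (p q : ℝ) (n : ℕ) :
    ∑ k ∈ range (n + 1), (n.choose k : ℝ) * ((k : ℝ) * p ^ k * q ^ (n - k))
      = n * p * (p + q) ^ (n - 1) := by
  cases n with
  | zero => simp
  | succ n =>
    rw [Finset.sum_range_succ']
    have h : ∀ k ∈ range (n + 1), ((n+1).choose (k+1) : ℝ) * ((k+1 : ℕ) * p ^ (k+1) * q ^ (n+1-(k+1)))
        = ((n:ℝ)+1) * p * ((n.choose k : ℝ) * (p ^ k * q ^ (n - k))) := by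
      intro k _
      have := Nat.add_one_mul_choose_eq n k
      have hcast : ((n+1).choose (k+1) : ℝ) * ((k:ℝ)+1) = ((n:ℝ)+1) * (n.choose k : ℝ) := by
        exact_mod_cast congrArg (Nat.cast (R := ℝ)) this.symm
      push_cast
      calc ((n+1).choose (k+1) : ℝ) * (((k:ℝ)+1) * p ^ (k+1) * q ^ (n-k))
          = (((n+1).choose (k+1) : ℝ) * ((k:ℝ)+1)) * (p ^ (k+1) * q ^ (n-k)) := by ring
        _ = (((n:ℝ)+1) * (n.choose k : ℝ)) * (p ^ (k+1) * q ^ (n-k)) := by rw [hcast]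
        _ = ((n:ℝ)+1) * p * ((n.choose k : ℝ) * (p ^ k * q ^ (n - k))) := by ring
    rw [Finset.sum_congr rfl h]
    rw [← Finset.mul_sum]
    have hb : ∑ k ∈ range (n + 1), (n.choose k : ℝ) * (p ^ k * q ^ (n - k)) = (p + q) ^ n := by
      rw [add_pow]
      exact Finset.sum_congr rfl fun k _ => by ring
    rw [hb]
    push_cast
    ring

lemma prod_three {m : ℕ} (A T : Finset (Fin m)) (hAT : A ⊆ T) (p q r : ℝ) :
    (∏ i : Fin m, if i ∈ A then p else if i ∈ T then q else r)
      = p ^ A.card * q ^ (T.card - A.card) * r ^ (m - T.card) := by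
  rw [← Finset.prod_mul_prod_compl T]
  have h1 : (∏ i ∈ T, if i ∈ A then p else if i ∈ T then q else r)
      = p ^ A.card * q ^ (T.card - A.card) := by
    calc (∏ i ∈ T, if i ∈ A then p else if i ∈ T then q else r)
        = ∏ i ∈ T, (if i ∈ A then p else q) :=
          Finset.prod_congr rfl (fun i hi => by by_cases h : i ∈ A <;> simp [h, hi])
      _ = p ^ A.card * q ^ (T.card - A.card) := by
          rw [Finset.prod_ite, Finset.prod_const, Finset.prod_const]
          congr 2
          · rw [Finset.filter_mem_eq_inter, Finset.inter_eq_right.2 hAT]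
          · rw [← Finset.sdiff_eq_filter, Finset.card_sdiff_of_subset hAT]
  have h2 : (∏ i ∈ Tᶜ, if i ∈ A then p else if i ∈ T then q else r) = r ^ (m - T.card) := by
    calc (∏ i ∈ Tᶜ, if i ∈ A then p else if i ∈ T then q else r)
        = ∏ _i ∈ Tᶜ, r :=
          Finset.prod_congr rfl (fun i hi => by
            have hT : i ∉ T := Finset.mem_compl.1 hi
            have hA : i ∉ A := fun h => hT (hAT h)
            simp [hT, hA])
      _ = r ^ (m - T.card) := by rw [Finset.prod_const, Finset.card_compl, Fintype.card_fin]
  rw [h1, h2]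

lemma comb (m : ℕ) (p q r : ℝ) (hp : 0 ≤ p) (hq : 0 ≤ q) (hpqr : p + q + r = 1)
    (w : Fin 3 → ℝ) (hw0 : w 0 = p) (hw1 : w 1 = q) (hw2 : w 2 = r) :
    ∑ v : Fin m → Fin 3,
        ((∑ i, ind (v i = 0)) / ((∑ i, ind (v i ≠ 2)) + ind (∀ i, v i = 2))) * ∏ i, w (v i)
      = (p / (p + q)) * (1 - r ^ m) := by
  have hfin : ∀ s : Fin 3, s = 0 ∨ s = 1 ∨ s = 2 := by decide
  set g : Finset (Fin m) → Finset (Fin m) → ℝ := fun T A =>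
    ((A.card : ℝ) / ((T.card : ℝ) + ind (T.card = 0))) *
      (p ^ A.card * q ^ (T.card - A.card) * r ^ (m - T.card)) with hg
  have hbij : ∑ v : Fin m → Fin 3,
        ((∑ i, ind (v i = 0)) / ((∑ i, ind (v i ≠ 2)) + ind (∀ i, v i = 2))) * ∏ i, w (v i)
      = ∑ x ∈ Finset.univ.powerset.sigma (fun T => T.powerset), g x.1 x.2 := by
    refine Finset.sum_bij'
      (i := fun v _ => (⟨Finset.univ.filter (fun j => v j ≠ 2),
          Finset.univ.filter (fun j => v j = 0)⟩ : Σ _ : Finset (Fin m), Finset (Fin m)))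
      (j := fun x _ => fun jj => if jj ∈ x.2 then 0 else if jj ∈ x.1 then 1 else 2)
      ?_ ?_ ?_ ?_ ?_
    · intro v _
      rw [Finset.mem_sigma]
      constructor
      · exact Finset.mem_powerset.2 (Finset.subset_univ _)
      · refine Finset.mem_powerset.2 (fun j hj => ?_)
        rw [Finset.mem_filter] at hj ⊢
        refine ⟨hj.1, ?_⟩
        rw [hj.2]; decide
    · intro x _; exact Finset.mem_univ _
    · intro v _
      funext jj
      rcases hfin (v jj) with h | h | h <;> simp [h, Finset.mem_filter]
    · intro x hx
      obtain ⟨T, A⟩ := x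
      rw [Finset.mem_sigma] at hx
      have hAT : A ⊆ T := Finset.mem_powerset.1 hx.2
      have h2 : (Finset.univ.filter fun jj =>
          (if jj ∈ A then (0 : Fin 3) else if jj ∈ T then 1 else 2) = 0) = A := by
        ext jj
        by_cases hA : jj ∈ A
        · simp [hA]
        · by_cases hT : jj ∈ T <;> simp [hA, hT]
      have h1 : (Finset.univ.filter fun jj =>
          (if jj ∈ A then (0 : Fin 3) else if jj ∈ T then 1 else 2) ≠ 2) = T := by
        ext jj
        by_cases hA : jj ∈ A
        · simp [hA, hAT hA]
        · by_cases hT : jj ∈ T <;> simp [hA, hT]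
      dsimp only
      rw [h1, h2]
    · intro v _
      have hall : ind (∀ i, v i = 2)
          = ind ((Finset.univ.filter fun j => v j ≠ 2).card = 0) := by
        refine congrArg ind (propext ?_)
        rw [Finset.card_eq_zero, Finset.filter_eq_empty_iff]
        constructor
        · intro h j _; rw [h j]; simp
        · intro h j; have := h (Finset.mem_univ j); simpa using this
      have hAT : (Finset.univ.filter fun j => v j = 0) ⊆ (Finset.univ.filter fun j => v j ≠ 2) := by
        intro j hj
        rw [Finset.mem_filter] at hj ⊢
        refine ⟨hj.1, ?_⟩; rw [hj.2]; decide
      have hprod : (∏ i, w (v i))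
          = p ^ (Finset.univ.filter fun j => v j = 0).card *
            q ^ ((Finset.univ.filter fun j => v j ≠ 2).card -
                 (Finset.univ.filter fun j => v j = 0).card) *
            r ^ (m - (Finset.univ.filter fun j => v j ≠ 2).card) := by
        rw [← prod_three _ _ hAT p q r]
        refine Finset.prod_congr rfl (fun i _ => ?_)
        rcases hfin (v i) with h | h | h <;> simp [h, Finset.mem_filter, hw0, hw1, hw2]
      simp only [sum_ind_card, hall, hprod, hg]
      congr!
  rw [hbij, ← Finset.sum_sigma']
  have hin : ∀ T ∈ Finset.univ.powerset (α := Fin m), ∑ A ∈ T.powerset, g T A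
      = ((T.card : ℝ) * p * (p + q) ^ (T.card - 1) / ((T.card : ℝ) + ind (T.card = 0)))
        * r ^ (m - T.card) := by
    intro T _
    have hgsum : ∑ A ∈ T.powerset, ((A.card : ℝ) * p ^ A.card * q ^ (T.card - A.card))
        = (T.card : ℝ) * p * (p + q) ^ (T.card - 1) := by
      have h1 := sum_powerset_card T (fun k => (k : ℝ) * p ^ k * q ^ (T.card - k))
      have h2 := binom_deriv p q T.card
      rw [h1]
      exact h2
    calc ∑ A ∈ T.powerset, g T A
        = ∑ A ∈ T.powerset, (r ^ (m - T.card) / ((T.card : ℝ) + ind (T.card = 0))) *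
            ((A.card : ℝ) * p ^ A.card * q ^ (T.card - A.card)) :=
          Finset.sum_congr rfl (fun A _ => by rw [hg]; ring)
      _ = (r ^ (m - T.card) / ((T.card : ℝ) + ind (T.card = 0))) *
            ((T.card : ℝ) * p * (p + q) ^ (T.card - 1)) := by rw [← Finset.mul_sum, hgsum]
      _ = ((T.card : ℝ) * p * (p + q) ^ (T.card - 1) / ((T.card : ℝ) + ind (T.card = 0)))
            * r ^ (m - T.card) := by ring
  rw [Finset.sum_congr rfl hin]
  have hcard : (Finset.univ : Finset (Fin m)).card = m := by
    rw [Finset.card_univ, Fintype.card_fin]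
  have hstep : ∑ T ∈ (Finset.univ : Finset (Fin m)).powerset,
        ((T.card : ℝ) * p * (p + q) ^ (T.card - 1) / ((T.card : ℝ) + ind (T.card = 0)))
          * r ^ (m - T.card)
      = ∑ k ∈ range (m + 1), (m.choose k : ℝ) *
          (((k : ℝ) * p * (p + q) ^ (k - 1) / ((k : ℝ) + ind (k = 0))) * r ^ (m - k)) := by
    have h1 := sum_powerset_card (Finset.univ : Finset (Fin m))
      (fun k => ((k : ℝ) * p * (p + q) ^ (k - 1) / ((k : ℝ) + ind (k = 0))) * r ^ (m - k))
    simp only [hcard] at h1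
    exact h1
  rw [hstep]
  have hsimp : ∀ k ∈ Finset.range (m+1),
      (m.choose k : ℝ) * (((k : ℝ) * p * (p + q) ^ (k - 1) / ((k : ℝ) + ind (k = 0))) * r ^ (m - k))
      = (m.choose k : ℝ) * (if k = 0 then 0 else p * (p + q) ^ (k - 1) * r ^ (m - k)) := by
    intro k _
    cases k with
    | zero => simp [ind]
    | succ k' =>
      have hne : ((k' : ℝ) + 1) ≠ 0 := by positivity
      rw [if_neg (Nat.succ_ne_zero k')]
      unfold ind
      rw [if_neg (Nat.succ_ne_zero k')]
      push_cast
      field_simp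
      ring
  rw [Finset.sum_congr rfl hsimp, Finset.sum_range_succ']
  have hzero : (m.choose 0 : ℝ) *
      (if (0:ℕ) = 0 then (0:ℝ) else p * (p + q) ^ (0 - 1) * r ^ (m - 0)) = 0 := by simp
  rw [hzero, add_zero]
  have hpos : ∀ k ∈ Finset.range m, (m.choose (k+1) : ℝ) *
      (if k + 1 = 0 then (0:ℝ) else p * (p + q) ^ (k + 1 - 1) * r ^ (m - (k + 1)))
      = (m.choose (k+1) : ℝ) * (p * (p + q) ^ (k + 1 - 1) * r ^ (m - (k + 1))) :=
    fun k _ => by rw [if_neg (Nat.succ_ne_zero k)]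
  rw [Finset.sum_congr rfl hpos]
  by_cases hp0 : p = 0
  · rw [hp0]
    simp
  · have hppos : 0 < p := lt_of_le_of_ne hp (Ne.symm hp0)
    have hs : 0 < p + q := by linarith
    rw [div_mul_eq_mul_div, eq_div_iff hs.ne']
    have key : ∑ k ∈ Finset.range m,
        (p + q) ^ (k + 1) * r ^ (m - (k + 1)) * ((m.choose (k+1) : ℝ)) = 1 - r ^ m := by
      have hb := add_pow (p + q) r m
      rw [Finset.sum_range_succ'] at hb
      have h1m : ((p + q) + r) ^ m = 1 ^ m := by rw [hpqr]
      rw [h1m, one_pow] at hb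
      simp only [pow_zero, one_mul, Nat.sub_zero, Nat.choose_zero_right, Nat.cast_one,
        mul_one] at hb
      linarith [hb]
    calc (∑ k ∈ Finset.range m,
          (m.choose (k+1) : ℝ) * (p * (p + q) ^ (k + 1 - 1) * r ^ (m - (k + 1)))) * (p + q)
        = p * ∑ k ∈ Finset.range m,
            (p + q) ^ (k + 1) * r ^ (m - (k + 1)) * ((m.choose (k+1) : ℝ)) := by
          rw [Finset.sum_mul, Finset.mul_sum]
          refine Finset.sum_congr rfl (fun k _ => ?_)
          simp only [Nat.add_sub_cancel]
          ring
      _ = p * (1 - r ^ m) := by rw [key]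


lemma integral_comp_fintype {Ω α : Type*} [MeasurableSpace Ω] (Pr : Measure Ω)
    [IsProbabilityMeasure Pr] [MeasurableSpace α] [Fintype α] [MeasurableSingletonClass α]
    {X : Ω → α} (hX : Measurable X) (f : α → ℝ) :
    ∫ ω, f (X ω) ∂Pr = ∑ y, f y * (Pr (X ⁻¹' {y})).toReal := by
  have hpm : IsProbabilityMeasure (Pr.map X) := Measure.isProbabilityMeasure_map hX.aemeasurable
  rw [← MeasureTheory.integral_map hX.aemeasurable
    ((measurable_of_countable f).aestronglyMeasurable)]
  rw [MeasureTheory.integral_fintype (hf := MeasureTheory.Integrable.of_finite)]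
  refine Finset.sum_congr rfl fun y _ => ?_
  rw [Measure.real, Measure.map_apply hX (measurableSet_singleton _), smul_eq_mul, mul_comm]

lemma expectation_eq {Ω : Type*} [MeasurableSpace Ω] (Pr : Measure Ω) [IsProbabilityMeasure Pr]
    (Y : ℕ → Ω → ℝ × ℝ) (hY : ∀ i, Measurable (Y i))
    (hind : iIndepFun Y Pr)
    (c : ℝ × ℝ → Fin 3) (hc : Measurable c)
    (w : Fin 3 → ℝ) (hw0 : ∀ s, 0 ≤ w s)
    (hw : ∀ (i : ℕ) (s : Fin 3), Pr (Y i ⁻¹' (c ⁻¹' {s})) = ENNReal.ofReal (w s))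
    (m : ℕ) (f : (Fin m → Fin 3) → ℝ) :
    ∫ ω, f (fun i => c (Y (i : ℕ) ω)) ∂Pr
      = ∑ v : Fin m → Fin 3, f v * ∏ i, w (v i) := by
  set X : Ω → (Fin m → Fin 3) := fun ω i => c (Y (i : ℕ) ω) with hXdef
  have hXm : Measurable X := measurable_pi_lambda _ (fun i => hc.comp (hY i))
  have hmap : ∀ v : Fin m → Fin 3,
      Pr (X ⁻¹' {v}) = ∏ i : Fin m, ENNReal.ofReal (w (v i)) := by
    intro v
    set sets : ℕ → Set (ℝ × ℝ) := fun i =>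
      if h : i < m then c ⁻¹' {v ⟨i, h⟩} else Set.univ with hsets
    have hsetsM : ∀ i, i ∈ Finset.range m → MeasurableSet (sets i) := by
      intro i _
      rw [hsets]
      by_cases h : i < m
      · simp only [dif_pos h]; exact hc (measurableSet_singleton _)
      · simp only [dif_neg h]; exact MeasurableSet.univ
    have hset : X ⁻¹' {v} = ⋂ i ∈ Finset.range m, Y i ⁻¹' sets i := by
      ext ω
      simp only [Set.mem_preimage, Set.mem_singleton_iff, Set.mem_iInter, funext_iff, hXdef]
      constructor
      · intro h i hi
        rw [Finset.mem_range] at hi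
        rw [hsets]
        simp only [dif_pos hi, Set.mem_preimage, Set.mem_singleton_iff]
        exact h ⟨i, hi⟩
      · intro h i
        have h2 := h i.val (Finset.mem_range.2 i.isLt)
        rw [hsets] at h2
        simp only [dif_pos i.isLt, Set.mem_preimage, Set.mem_singleton_iff] at h2
        simpa using h2
    rw [hset, hind.measure_inter_preimage_eq_mul (Finset.range m) hsetsM]
    set FF : ℕ → ℝ≥0∞ := fun i =>
      if h : i < m then ENNReal.ofReal (w (v ⟨i, h⟩)) else 1 with hFF
    have h1 : ∀ i ∈ Finset.range m, Pr (Y i ⁻¹' sets i) = FF i := by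
      intro i hi
      rw [Finset.mem_range] at hi
      rw [hsets, hFF]
      simp only [dif_pos hi]
      exact hw i _
    rw [Finset.prod_congr rfl h1, Finset.prod_range FF]
    refine Finset.prod_congr rfl (fun i _ => ?_)
    rw [hFF]
    simp only [dif_pos i.isLt, Fin.eta]
  rw [integral_comp_fintype Pr hXm f]
  refine Finset.sum_congr rfl (fun v _ => ?_)
  rw [hmap v, ENNReal.toReal_prod]
  congr 1
  exact Finset.prod_congr rfl (fun i _ => ENNReal.toReal_ofReal (hw0 _))

def cFDP (t : ℝ) : ℝ × ℝ → Fin 3 :=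
  fun x => if x.2 ≤ t then (if x.1 = 1 then 1 else 0) else 2

def cFNP (t : ℝ) : ℝ × ℝ → Fin 3 :=
  fun x => if x.2 ≤ t then 2 else (if x.1 = 1 then 0 else 1)

lemma cFDP_meas (t : ℝ) : Measurable (cFDP t) := by
  unfold cFDP
  refine Measurable.ite ?_ (Measurable.ite ?_ measurable_const measurable_const) measurable_const
  · exact measurable_snd measurableSet_Iic
  · exact measurable_fst (measurableSet_singleton 1)

lemma cFNP_meas (t : ℝ) : Measurable (cFNP t) := by
  unfold cFNP
  refine Measurable.ite ?_ measurable_const (Measurable.ite ?_ measurable_const measurable_const)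
  · exact measurable_snd measurableSet_Iic
  · exact measurable_fst (measurableSet_singleton 1)

/-- Lemma 2.1. Under the random effects mixture model, for every fixed
`t > 0`, `E[Γ(t)] = Q(t)·(1 − (1 − G(t))^m)` and `E[Ξ(t)] = Q̃(t)·(1 − G(t)^m)`, where
`Q(t) = (1−a)t/G(t)`, `Q̃(t) = a(1 − F(t))/(1 − G(t))` and `G = (1−a)U + aF`. -/
theorem expected_FDP_FNP
    {Ω : Type*} [MeasurableSpace Ω] (Pr : Measure Ω) [IsProbabilityMeasure Pr]
    (H P : ℕ → Ω → ℝ) (a : ℝ) (ha : a ∈ Set.Icc (0 : ℝ) 1)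
    (F : ℝ → ℝ) (hF : IsPvalueCDF F)
    (hmod : RandomEffectsModel Pr H P a F)
    (m : ℕ) (hm : 0 < m) (t : ℝ) (ht : t ∈ Set.Ioc (0 : ℝ) 1)
    (G : ℝ → ℝ) (hG : ∀ s, G s = (1 - a) * Ucdf s + a * F s) :
    (∫ ω, FDP m (fun i => H i ω) (fun i => P i ω) t ∂Pr) =
      ((1 - a) * t / G t) * (1 - (1 - G t) ^ m) ∧
    (∫ ω, FNP m (fun i => H i ω) (fun i => P i ω) t ∂Pr) =
      (a * (1 - F t) / (1 - G t)) * (1 - (G t) ^ m) := by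
  obtain ⟨hHm, hPm, hH01, hP01, hindep, hident, hHa, hJ0, hJ1⟩ := hmod
  obtain ⟨ht0, ht1⟩ := ht
  obtain ⟨ha0, ha1⟩ := ha
  have hU : Ucdf t = t := by
    unfold Ucdf; rw [min_eq_left ht1, max_eq_right (le_of_lt ht0)]
  have hGt : G t = (1 - a) * t + a * F t := by rw [hG t, hU]
  have hFt1 : F t ≤ 1 := by
    rw [← hF.2.2.1 1 le_rfl]; exact hF.1 ht1
  have hFt0 : 0 ≤ F t := le_trans (le_of_lt ht0) (hF.2.2.2 t ⟨le_of_lt ht0, ht1⟩)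
  have hGt0 : 0 ≤ G t := by rw [hGt]; nlinarith
  have hGt1 : G t ≤ 1 := by rw [hGt]; nlinarith
  have mH1 : ∀ i, MeasurableSet {ω | H i ω = 1} := fun i => hHm i (measurableSet_singleton 1)
  have mH0 : ∀ i, MeasurableSet {ω | H i ω = 0} := fun i => hHm i (measurableSet_singleton 0)
  have mPle : ∀ i, MeasurableSet {ω | P i ω ≤ t} := fun i => hPm i measurableSet_Iic
  have mJ1 : ∀ i, MeasurableSet {ω | H i ω = 1 ∧ P i ω ≤ t} :=
    fun i => (mH1 i).inter (mPle i)
  have e1 : ∀ i, Pr {ω | H i ω = 1 ∧ P i ω ≤ t} = ENNReal.ofReal (a * F t) :=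
    fun i => hJ1 i t ⟨le_of_lt ht0, ht1⟩
  have e0 : ∀ i, Pr {ω | H i ω = 0 ∧ P i ω ≤ t} = ENNReal.ofReal ((1 - a) * t) :=
    fun i => hJ0 i t ⟨le_of_lt ht0, ht1⟩
  have ePle : ∀ i, Pr {ω | P i ω ≤ t} = ENNReal.ofReal (G t) := by
    intro i
    have hsplit : {ω | P i ω ≤ t}
        = {ω | H i ω = 0 ∧ P i ω ≤ t} ∪ {ω | H i ω = 1 ∧ P i ω ≤ t} := by
      ext ω
      simp only [Set.mem_setOf_eq, Set.mem_union]
      constructor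
      · intro hp
        rcases hH01 i ω with h | h
        · exact Or.inl ⟨h, hp⟩
        · exact Or.inr ⟨h, hp⟩
      · rintro (⟨_, hp⟩ | ⟨_, hp⟩) <;> exact hp
    have hdisj : Disjoint {ω | H i ω = 0 ∧ P i ω ≤ t} {ω | H i ω = 1 ∧ P i ω ≤ t} := by
      rw [Set.disjoint_left]
      rintro ω ⟨h0, _⟩ ⟨h1, _⟩
      rw [h0] at h1; norm_num at h1
    rw [hsplit, measure_union hdisj (mJ1 i), e0 i, e1 i,
      ← ENNReal.ofReal_add (by nlinarith) (by nlinarith), hGt]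
  have ePgt : ∀ i, Pr {ω | ¬ P i ω ≤ t} = ENNReal.ofReal (1 - G t) := by
    intro i
    have hc : {ω | ¬ P i ω ≤ t} = {ω | P i ω ≤ t}ᶜ := rfl
    rw [hc, prob_compl_eq_one_sub (mPle i), ePle i, ← ENNReal.ofReal_one,
      ← ENNReal.ofReal_sub 1 hGt0]
  have eH1gt : ∀ i, Pr {ω | H i ω = 1 ∧ ¬ P i ω ≤ t} = ENNReal.ofReal (a * (1 - F t)) := by
    intro i
    have hsplit : {ω | H i ω = 1}
        = {ω | H i ω = 1 ∧ P i ω ≤ t} ∪ {ω | H i ω = 1 ∧ ¬ P i ω ≤ t} := by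
      ext ω
      simp only [Set.mem_setOf_eq, Set.mem_union]
      by_cases hp : P i ω ≤ t <;> tauto
    have hdisj : Disjoint {ω | H i ω = 1 ∧ P i ω ≤ t} {ω | H i ω = 1 ∧ ¬ P i ω ≤ t} := by
      rw [Set.disjoint_left]
      rintro ω ⟨_, hp⟩ ⟨_, hnp⟩
      exact hnp hp
    have htot := hHa i
    rw [hsplit, measure_union hdisj ((mH1 i).inter (mPle i).compl), e1 i] at htot
    have hsum : ENNReal.ofReal (a * F t) + ENNReal.ofReal (a * (1 - F t))
        = ENNReal.ofReal a := by
      rw [← ENNReal.ofReal_add (by nlinarith) (by nlinarith)]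
      congr 1; ring
    exact (ENNReal.add_right_inj ENNReal.ofReal_ne_top).1 (htot.trans hsum.symm)
  have eH0 : ∀ i, Pr {ω | H i ω = 0} = ENNReal.ofReal (1 - a) := by
    intro i
    have hc : {ω | H i ω = 0} = {ω | H i ω = 1}ᶜ := by
      ext ω
      simp only [Set.mem_setOf_eq, Set.mem_compl_iff]
      constructor
      · intro h0 h1; rw [h0] at h1; norm_num at h1
      · intro h1
        rcases hH01 i ω with h | h
        · exact h
        · exact absurd h h1
    rw [hc, prob_compl_eq_one_sub (mH1 i), hHa i, ← ENNReal.ofReal_one,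
      ← ENNReal.ofReal_sub 1 ha0]
  have eH0gt : ∀ i, Pr {ω | H i ω = 0 ∧ ¬ P i ω ≤ t}
      = ENNReal.ofReal ((1 - a) * (1 - t)) := by
    intro i
    have hsplit : {ω | H i ω = 0}
        = {ω | H i ω = 0 ∧ P i ω ≤ t} ∪ {ω | H i ω = 0 ∧ ¬ P i ω ≤ t} := by
      ext ω
      simp only [Set.mem_setOf_eq, Set.mem_union]
      by_cases hp : P i ω ≤ t <;> tauto
    have hdisj : Disjoint {ω | H i ω = 0 ∧ P i ω ≤ t} {ω | H i ω = 0 ∧ ¬ P i ω ≤ t} := by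
      rw [Set.disjoint_left]
      rintro ω ⟨_, hp⟩ ⟨_, hnp⟩
      exact hnp hp
    have htot := eH0 i
    rw [hsplit, measure_union hdisj ((mH0 i).inter (mPle i).compl), e0 i] at htot
    have hsum : ENNReal.ofReal ((1 - a) * t) + ENNReal.ofReal ((1 - a) * (1 - t))
        = ENNReal.ofReal (1 - a) := by
      rw [← ENNReal.ofReal_add (by nlinarith) (by nlinarith)]
      congr 1; ring
    exact (ENNReal.add_right_inj ENNReal.ofReal_ne_top).1 (htot.trans hsum.symm)
  have hYm : ∀ i, Measurable (fun ω => (H i ω, P i ω)) :=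
    fun i => (hHm i).prodMk (hPm i)
  have hfin3 : ∀ s : Fin 3, s = 0 ∨ s = 1 ∨ s = 2 := by decide
  constructor
  · -- FDP
    set wF : Fin 3 → ℝ := fun s => if s = 0 then (1 - a) * t else if s = 1 then a * F t
      else 1 - G t with hwF
    have hwF0 : wF 0 = (1 - a) * t := by simp [hwF]
    have hwF1 : wF 1 = a * F t := by simp [hwF]
    have hwF2 : wF 2 = 1 - G t := by simp [hwF]
    have hwnn : ∀ s, 0 ≤ wF s := by
      intro s
      rcases hfin3 s with rfl | rfl | rfl <;> simp [hwF] <;> nlinarith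
    have hwval : ∀ (i : ℕ) (s : Fin 3),
        Pr ((fun ω => (H i ω, P i ω)) ⁻¹' (cFDP t ⁻¹' {s})) = ENNReal.ofReal (wF s) := by
      intro i s
      rcases hfin3 s with rfl | rfl | rfl
      · have hset : (fun ω => (H i ω, P i ω)) ⁻¹' (cFDP t ⁻¹' {0})
            = {ω | H i ω = 0 ∧ P i ω ≤ t} := by
          ext ω
          simp only [Set.mem_preimage, Set.mem_singleton_iff, Set.mem_setOf_eq, cFDP]
          by_cases hp : P i ω ≤ t
          · rcases hH01 i ω with h | h <;> simp [hp, h]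
          · simp [hp]
        rw [hset, e0 i, hwF0]
      · have hset : (fun ω => (H i ω, P i ω)) ⁻¹' (cFDP t ⁻¹' {1})
            = {ω | H i ω = 1 ∧ P i ω ≤ t} := by
          ext ω
          simp only [Set.mem_preimage, Set.mem_singleton_iff, Set.mem_setOf_eq, cFDP]
          by_cases hp : P i ω ≤ t
          · rcases hH01 i ω with h | h <;> simp [hp, h]
          · simp [hp]
        rw [hset, e1 i, hwF1]
      · have hset : (fun ω => (H i ω, P i ω)) ⁻¹' (cFDP t ⁻¹' {2})
            = {ω | ¬ P i ω ≤ t} := by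
          ext ω
          simp only [Set.mem_preimage, Set.mem_singleton_iff, Set.mem_setOf_eq, cFDP]
          by_cases hp : P i ω ≤ t
          · rcases hH01 i ω with h | h <;> simp [hp, h]
          · simp [hp]
        rw [hset, ePgt i, hwF2]
    have hpt : ∀ ω, FDP m (fun i => H i ω) (fun i => P i ω) t
        = (∑ i : Fin m, ind (cFDP t (H (i : ℕ) ω, P (i : ℕ) ω) = 0)) /
          ((∑ i : Fin m, ind (cFDP t (H (i : ℕ) ω, P (i : ℕ) ω) ≠ 2)) +
            ind (∀ i : Fin m, cFDP t (H (i : ℕ) ω, P (i : ℕ) ω) = 2)) := by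
      intro ω
      unfold FDP
      have hnum : ∑ i ∈ Finset.range m, ind (P i ω ≤ t) * (1 - H i ω)
          = ∑ i : Fin m, ind (cFDP t (H (i : ℕ) ω, P (i : ℕ) ω) = 0) := by
        rw [Finset.sum_range (fun i => ind (P i ω ≤ t) * (1 - H i ω))]
        refine Finset.sum_congr rfl (fun i _ => ?_)
        by_cases hp : P (i : ℕ) ω ≤ t
        · rcases hH01 (i : ℕ) ω with h | h <;> simp [cFDP, ind, hp, h]
        · simp [cFDP, ind, hp]
      have hden : ∑ i ∈ Finset.range m, ind (P i ω ≤ t)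
          = ∑ i : Fin m, ind (cFDP t (H (i : ℕ) ω, P (i : ℕ) ω) ≠ 2) := by
        rw [Finset.sum_range (fun i => ind (P i ω ≤ t))]
        refine Finset.sum_congr rfl (fun i _ => ?_)
        by_cases hp : P (i : ℕ) ω ≤ t
        · rcases hH01 (i : ℕ) ω with h | h <;> simp [cFDP, ind, hp, h]
        · simp [cFDP, ind, hp]
      have hall : ind (∀ i ∈ Finset.range m, t < P i ω)
          = ind (∀ i : Fin m, cFDP t (H (i : ℕ) ω, P (i : ℕ) ω) = 2) := by
        refine congrArg ind (propext ?_)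
        constructor
        · intro hgt i
          have hlt := hgt (i : ℕ) (Finset.mem_range.2 i.isLt)
          simp [cFDP, not_le.2 hlt]
        · intro hC i hi
          have h2 := hC ⟨i, Finset.mem_range.1 hi⟩
          by_contra hle
          rw [not_lt] at hle
          simp only [cFDP] at h2
          rw [if_pos hle] at h2
          rcases hH01 i ω with h | h <;> simp [h] at h2
      rw [hnum, hden, hall]
    have hEE := expectation_eq Pr (fun i ω => (H i ω, P i ω)) hYm hindep (cFDP t)
      (cFDP_meas t) wF hwnn hwval m
      (fun v => (∑ i, ind (v i = 0)) / ((∑ i, ind (v i ≠ 2)) + ind (∀ i, v i = 2)))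
    simp only at hEE
    rw [show (∫ ω, FDP m (fun i => H i ω) (fun i => P i ω) t ∂Pr)
        = ∫ ω, (∑ i : Fin m, ind (cFDP t (H (i : ℕ) ω, P (i : ℕ) ω) = 0)) /
            ((∑ i : Fin m, ind (cFDP t (H (i : ℕ) ω, P (i : ℕ) ω) ≠ 2)) +
              ind (∀ i : Fin m, cFDP t (H (i : ℕ) ω, P (i : ℕ) ω) = 2)) ∂Pr
      from integral_congr_ae (Filter.Eventually.of_forall hpt)]
    rw [hEE]
    rw [comb m ((1 - a) * t) (a * F t) (1 - G t) (by nlinarith) (by nlinarith)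
      (by rw [hGt]; ring) wF hwF0 hwF1 hwF2]
    rw [show (1 - a) * t + a * F t = G t from hGt.symm]
  · -- FNP
    set wN : Fin 3 → ℝ := fun s => if s = 0 then a * (1 - F t) else if s = 1 then
      (1 - a) * (1 - t) else G t with hwN
    have hwN0 : wN 0 = a * (1 - F t) := by simp [hwN]
    have hwN1 : wN 1 = (1 - a) * (1 - t) := by simp [hwN]
    have hwN2 : wN 2 = G t := by simp [hwN]
    have hwnn : ∀ s, 0 ≤ wN s := by
      intro s
      rcases hfin3 s with rfl | rfl | rfl <;> simp [hwN] <;> nlinarith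
    have hwval : ∀ (i : ℕ) (s : Fin 3),
        Pr ((fun ω => (H i ω, P i ω)) ⁻¹' (cFNP t ⁻¹' {s})) = ENNReal.ofReal (wN s) := by
      intro i s
      rcases hfin3 s with rfl | rfl | rfl
      · have hset : (fun ω => (H i ω, P i ω)) ⁻¹' (cFNP t ⁻¹' {0})
            = {ω | H i ω = 1 ∧ ¬ P i ω ≤ t} := by
          ext ω
          simp only [Set.mem_preimage, Set.mem_singleton_iff, Set.mem_setOf_eq, cFNP]
          by_cases hp : P i ω ≤ t
          · rcases hH01 i ω with h | h <;> simp [hp, h]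
          · rcases hH01 i ω with h | h <;> simp [hp, h]
        rw [hset, eH1gt i, hwN0]
      · have hset : (fun ω => (H i ω, P i ω)) ⁻¹' (cFNP t ⁻¹' {1})
            = {ω | H i ω = 0 ∧ ¬ P i ω ≤ t} := by
          ext ω
          simp only [Set.mem_preimage, Set.mem_singleton_iff, Set.mem_setOf_eq, cFNP]
          by_cases hp : P i ω ≤ t
          · rcases hH01 i ω with h | h <;> simp [hp, h]
          · rcases hH01 i ω with h | h <;> simp [hp, h]
        rw [hset, eH0gt i, hwN1]
      · have hset : (fun ω => (H i ω, P i ω)) ⁻¹' (cFNP t ⁻¹' {2})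
            = {ω | P i ω ≤ t} := by
          ext ω
          simp only [Set.mem_preimage, Set.mem_singleton_iff, Set.mem_setOf_eq, cFNP]
          by_cases hp : P i ω ≤ t
          · simp [hp]
          · rcases hH01 i ω with h | h <;> simp [hp, h]
        rw [hset, ePle i, hwN2]
    have hpt : ∀ ω, FNP m (fun i => H i ω) (fun i => P i ω) t
        = (∑ i : Fin m, ind (cFNP t (H (i : ℕ) ω, P (i : ℕ) ω) = 0)) /
          ((∑ i : Fin m, ind (cFNP t (H (i : ℕ) ω, P (i : ℕ) ω) ≠ 2)) +
            ind (∀ i : Fin m, cFNP t (H (i : ℕ) ω, P (i : ℕ) ω) = 2)) := by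
      intro ω
      unfold FNP
      have hnum : ∑ i ∈ Finset.range m, ind (t < P i ω) * H i ω
          = ∑ i : Fin m, ind (cFNP t (H (i : ℕ) ω, P (i : ℕ) ω) = 0) := by
        rw [Finset.sum_range (fun i => ind (t < P i ω) * H i ω)]
        refine Finset.sum_congr rfl (fun i _ => ?_)
        by_cases hp : P (i : ℕ) ω ≤ t
        · simp [cFNP, ind, hp, not_lt.2 hp]
        · rcases hH01 (i : ℕ) ω with h | h <;>
            simp [cFNP, ind, hp, h, lt_of_not_ge hp, not_le.1 hp]
      have hden : ∑ i ∈ Finset.range m, ind (t < P i ω)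
          = ∑ i : Fin m, ind (cFNP t (H (i : ℕ) ω, P (i : ℕ) ω) ≠ 2) := by
        rw [Finset.sum_range (fun i => ind (t < P i ω))]
        refine Finset.sum_congr rfl (fun i _ => ?_)
        by_cases hp : P (i : ℕ) ω ≤ t
        · simp [cFNP, ind, hp, not_lt.2 hp]
        · rcases hH01 (i : ℕ) ω with h | h <;>
            simp [cFNP, ind, hp, h, lt_of_not_ge hp, not_le.1 hp]
      have hall : ind (∀ i ∈ Finset.range m, P i ω ≤ t)
          = ind (∀ i : Fin m, cFNP t (H (i : ℕ) ω, P (i : ℕ) ω) = 2) := by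
        refine congrArg ind (propext ?_)
        constructor
        · intro hle i
          have hp := hle (i : ℕ) (Finset.mem_range.2 i.isLt)
          simp [cFNP, hp]
        · intro hC i hi
          have h2 := hC ⟨i, Finset.mem_range.1 hi⟩
          by_contra hnle
          simp only [cFNP] at h2
          rw [if_neg hnle] at h2
          rcases hH01 i ω with h | h <;> simp [h] at h2
      rw [hnum, hden, hall]
    have hEE := expectation_eq Pr (fun i ω => (H i ω, P i ω)) hYm hindep (cFNP t)
      (cFNP_meas t) wN hwnn hwval m
      (fun v => (∑ i, ind (v i = 0)) / ((∑ i, ind (v i ≠ 2)) + ind (∀ i, v i = 2)))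
    simp only at hEE
    rw [show (∫ ω, FNP m (fun i => H i ω) (fun i => P i ω) t ∂Pr)
        = ∫ ω, (∑ i : Fin m, ind (cFNP t (H (i : ℕ) ω, P (i : ℕ) ω) = 0)) /
            ((∑ i : Fin m, ind (cFNP t (H (i : ℕ) ω, P (i : ℕ) ω) ≠ 2)) +
              ind (∀ i : Fin m, cFNP t (H (i : ℕ) ω, P (i : ℕ) ω) = 2)) ∂Pr
      from integral_congr_ae (Filter.Eventually.of_forall hpt)]
    rw [hEE]
    rw [comb m (a * (1 - F t)) ((1 - a) * (1 - t)) (G t) (by nlinarith) (by nlinarith)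
      (by rw [hGt]; ring) wN hwN0 hwN1 hwN2]
    rw [show a * (1 - F t) + (1 - a) * (1 - t) = 1 - G t from by rw [hGt]; ring]
end
end

section
/- If F is absolutely continuous and stochastically dominates the Uniform(0,1), then ζ_F = 1 − inf_t F′(t) and a̱ = 1 − inf_t G′(t). If moreover F is concave, these infima are achieved at t = 1. Furthermore, for any b ∈ [ζ_F, 1], G = (1 − ab)U + ab F_b, where F_b = (F − (1−b)U)/b is a CDF and F ≤ F_b pointwise. -/
open MeasureTheory ProbabilityTheory Filter
open scoped ENNReal NNReal Topology Classical

noncomputable section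

section PurityAux

lemma Ucdf_of_mem {t : ℝ} (ht : t ∈ Set.Icc (0:ℝ) 1) : Ucdf t = t := by
  simp only [Ucdf, min_eq_left ht.2, max_eq_right ht.1]

lemma Ucdf_of_nonpos {t : ℝ} (ht : t ≤ 0) : Ucdf t = 0 := by
  simp only [Ucdf, max_eq_left (le_trans (min_le_left t 1) ht)]

lemma Ucdf_of_one_le {t : ℝ} (ht : 1 ≤ t) : Ucdf t = 1 := by
  simp only [Ucdf, min_eq_right ht, max_eq_right zero_le_one]

lemma Ucdf_mem_Icc (t : ℝ) : Ucdf t ∈ Set.Icc (0:ℝ) 1 :=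
  ⟨le_max_left _ _, max_le zero_le_one (min_le_right t 1)⟩

lemma Ucdf_mono : Monotone Ucdf := fun s t hst =>
  max_le_max le_rfl (min_le_min hst le_rfl)

lemma Ucdf_isPvalueCDF : IsPvalueCDF Ucdf :=
  ⟨Ucdf_mono, fun t ht => Ucdf_of_nonpos ht, fun t ht => Ucdf_of_one_le ht,
    fun t ht => (Ucdf_of_mem ht).ge⟩

lemma intInt (f : ℝ → ℝ) (hfc : ContinuousOn f (Set.Icc (0:ℝ) 1))
    {s t : ℝ} (hs : s ∈ Set.Icc (0:ℝ) 1) (ht : t ∈ Set.Icc (0:ℝ) 1) :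
    IntervalIntegrable f volume s t := by
  apply ContinuousOn.intervalIntegrable
  apply hfc.mono
  rw [← Set.uIcc_of_le (zero_le_one : (0:ℝ) ≤ 1)]
  apply Set.uIcc_subset_uIcc <;> rwa [Set.uIcc_of_le zero_le_one]

lemma Fdiff (F f : ℝ → ℝ) (hfc : ContinuousOn f (Set.Icc (0:ℝ) 1))
    (hac : ∀ t ∈ Set.Icc (0:ℝ) 1, F t = ∫ s in (0:ℝ)..t, f s)
    {s t : ℝ} (hs : s ∈ Set.Icc (0:ℝ) 1) (ht : t ∈ Set.Icc (0:ℝ) 1) :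
    F t - F s = ∫ x in s..t, f x := by
  rw [hac t ht, hac s hs]
  exact intervalIntegral.integral_interval_sub_left
    (intInt f hfc (Set.left_mem_Icc.2 zero_le_one) ht)
    (intInt f hfc (Set.left_mem_Icc.2 zero_le_one) hs)

lemma Flb (F f : ℝ → ℝ) (hfc : ContinuousOn f (Set.Icc (0:ℝ) 1))
    (hac : ∀ t ∈ Set.Icc (0:ℝ) 1, F t = ∫ s in (0:ℝ)..t, f s)
    {c : ℝ} {s t : ℝ} (hs : s ∈ Set.Icc (0:ℝ) 1) (ht : t ∈ Set.Icc (0:ℝ) 1)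
    (hst : s ≤ t) (hlb : ∀ u ∈ Set.Icc s t, c ≤ f u) :
    c * (t - s) ≤ F t - F s := by
  rw [Fdiff F f hfc hac hs ht]
  have h1 : ∫ x in s..t, (fun _ : ℝ => c) x ≤ ∫ x in s..t, f x :=
    intervalIntegral.integral_mono_on hst intervalIntegrable_const
      (intInt f hfc hs ht) hlb
  simpa [mul_comm] using h1

lemma Fub (F f : ℝ → ℝ) (hfc : ContinuousOn f (Set.Icc (0:ℝ) 1))
    (hac : ∀ t ∈ Set.Icc (0:ℝ) 1, F t = ∫ s in (0:ℝ)..t, f s)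
    {c : ℝ} {s t : ℝ} (hs : s ∈ Set.Icc (0:ℝ) 1) (ht : t ∈ Set.Icc (0:ℝ) 1)
    (hst : s ≤ t) (hub : ∀ u ∈ Set.Icc s t, f u ≤ c) :
    F t - F s ≤ c * (t - s) := by
  rw [Fdiff F f hfc hac hs ht]
  have h1 : ∫ x in s..t, f x ≤ ∫ x in s..t, (fun _ : ℝ => c) x :=
    intervalIntegral.integral_mono_on hst (intInt f hfc hs ht)
      intervalIntegrable_const hub
  simpa [mul_comm] using h1

lemma Fb_isPvalueCDF (F f : ℝ → ℝ) (hF : IsPvalueCDF F)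
    (hfc : ContinuousOn f (Set.Icc (0:ℝ) 1))
    (hac : ∀ t ∈ Set.Icc (0:ℝ) 1, F t = ∫ s in (0:ℝ)..t, f s)
    {b : ℝ} (hb0 : 0 < b) (hb1 : b ≤ 1)
    (hlb : ∀ u ∈ Set.Icc (0:ℝ) 1, 1 - b ≤ f u) :
    IsPvalueCDF (fun t => (F t - (1 - b) * Ucdf t) / b) := by
  obtain ⟨hFm, hF0, hF1, hFd⟩ := hF
  have hφeq : ∀ x, F x - (1 - b) * Ucdf x = F (Ucdf x) - (1 - b) * Ucdf (Ucdf x) := by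
    intro x
    rcases le_or_gt x 0 with hx | hx
    · have h0 : (0:ℝ) ∈ Set.Icc (0:ℝ) 1 := Set.left_mem_Icc.2 zero_le_one
      simp [hF0 x hx, Ucdf_of_nonpos hx, hF0 0 le_rfl, Ucdf_of_mem h0]
    rcases le_or_gt x 1 with hx1 | hx1
    · simp only [Ucdf_of_mem ⟨hx.le, hx1⟩]
    · have h1 : (1:ℝ) ∈ Set.Icc (0:ℝ) 1 := Set.right_mem_Icc.2 zero_le_one
      simp [hF1 x hx1.le, Ucdf_of_one_le hx1.le, hF1 1 le_rfl, Ucdf_of_mem h1]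
  have hφmono : ∀ s ∈ Set.Icc (0:ℝ) 1, ∀ t ∈ Set.Icc (0:ℝ) 1, s ≤ t →
      F s - (1 - b) * Ucdf s ≤ F t - (1 - b) * Ucdf t := by
    intro s hs t ht hst
    have h1 := Flb F f hfc hac hs ht hst
      (fun u hu => hlb u ⟨le_trans hs.1 hu.1, le_trans hu.2 ht.2⟩)
    rw [Ucdf_of_mem hs, Ucdf_of_mem ht]
    nlinarith
  refine ⟨?_, ?_, ?_, ?_⟩
  · intro s t hst
    have h1 : F s - (1 - b) * Ucdf s ≤ F t - (1 - b) * Ucdf t := by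
      rw [hφeq s, hφeq t]
      exact hφmono _ (Ucdf_mem_Icc s) _ (Ucdf_mem_Icc t) (Ucdf_mono hst)
    simp only [div_eq_mul_inv]
    exact mul_le_mul_of_nonneg_right h1 (inv_nonneg.2 hb0.le)
  · intro t ht
    simp [hF0 t ht, Ucdf_of_nonpos ht]
  · intro t ht
    simp only
    rw [hF1 t ht, Ucdf_of_one_le ht]
    field_simp
    ring
  · intro t ht
    simp only
    rw [Ucdf_of_mem ht, le_div_iff₀ hb0]
    have := hFd t ht
    nlinarith

lemma oset_lower (F f : ℝ → ℝ) (hF : IsPvalueCDF F)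
    (hfc : ContinuousOn f (Set.Icc (0:ℝ) 1))
    (hac : ∀ t ∈ Set.Icc (0:ℝ) 1, F t = ∫ s in (0:ℝ)..t, f s)
    {b : ℝ} (hb : b ∈ OSet F) : ∀ u ∈ Set.Icc (0:ℝ) 1, 1 - b ≤ f u := by
  obtain ⟨⟨hb0, hb1⟩, Hc, hHc, hrep⟩ := hb
  intro u hu
  by_contra hcon
  push_neg at hcon
  set ε := (1 - b - f u) / 2 with hε
  have hεpos : 0 < ε := by rw [hε]; linarith
  obtain ⟨δ, hδpos, hδ⟩ := Metric.continuousWithinAt_iff.1 (hfc u hu) ε hεpos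
  set δ' := min (δ / 2) (1 / 2) with hδ'
  have hδ'pos : 0 < δ' := lt_min (by linarith) one_half_pos
  have hδ'le : δ' ≤ δ / 2 := min_le_left _ _
  set s := max 0 (u - δ') with hsdef
  set t := min 1 (u + δ') with htdef
  have hu0 := hu.1; have hu1 := hu.2
  have hs : s ∈ Set.Icc (0:ℝ) 1 :=
    ⟨le_max_left _ _, max_le zero_le_one (by linarith)⟩
  have ht : t ∈ Set.Icc (0:ℝ) 1 :=
    ⟨le_min zero_le_one (by linarith), min_le_left _ _⟩
  have hst : s < t :=
    lt_min (max_lt one_pos (by linarith)) (max_lt (by linarith) (by linarith))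
  have hub : ∀ x ∈ Set.Icc s t, f x ≤ f u + ε := by
    intro x hx
    have hx1 : u - δ' ≤ x := le_trans (le_max_right _ _) hx.1
    have hx2 : x ≤ u + δ' := le_trans hx.2 (min_le_right _ _)
    have hxm : x ∈ Set.Icc (0:ℝ) 1 := ⟨le_trans hs.1 hx.1, le_trans hx.2 ht.2⟩
    have hdist : dist x u < δ := by
      rw [Real.dist_eq, abs_lt]; constructor <;> linarith
    have h2 := hδ hxm hdist
    rw [Real.dist_eq, abs_lt] at h2
    linarith [h2.1, h2.2]
  have hint : F t - F s ≤ (f u + ε) * (t - s) := Fub F f hfc hac hs ht hst.le hub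
  have hHmono : Hc s ≤ Hc t := hHc.1 hst.le
  have hFts : (1 - b) * (t - s) ≤ F t - F s := by
    rw [hrep t, hrep s, Ucdf_of_mem hs, Ucdf_of_mem ht]
    nlinarith
  have hfin : 1 - b ≤ f u + ε :=
    le_of_mul_le_mul_right (le_trans hFts hint) (by linarith)
  rw [hε] at hfin
  linarith

lemma concave_increment {F : ℝ → ℝ} (hcon : ConcaveOn ℝ (Set.Icc (0:ℝ) 1) F)
    {x y h : ℝ} (hx : 0 ≤ x) (hxy : x ≤ y) (hh : 0 ≤ h) (hyh : y + h ≤ 1) :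
    F (y + h) - F y ≤ F (x + h) - F x := by
  rcases eq_or_lt_of_le (show x ≤ y + h by linarith) with heq | hlt
  · have hyx : y = x := by linarith
    have hh0 : h = 0 := by linarith
    simp [hyx, hh0]
  set d := y + h - x with hd
  have hdpos : 0 < d := by rw [hd]; linarith
  have hdne : d ≠ 0 := ne_of_gt hdpos
  have hxm : x ∈ Set.Icc (0:ℝ) 1 := ⟨hx, by linarith⟩
  have hym : y + h ∈ Set.Icc (0:ℝ) 1 := ⟨by linarith, hyh⟩
  have h1 : (h / d) • F x + ((y - x) / d) • F (y + h) ≤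
      F ((h / d) • x + ((y - x) / d) • (y + h)) :=
    hcon.2 hxm hym (div_nonneg hh hdpos.le) (div_nonneg (by linarith) hdpos.le)
      (by field_simp; rw [hd]; ring)
  have h2 : ((y - x) / d) • F x + (h / d) • F (y + h) ≤
      F (((y - x) / d) • x + (h / d) • (y + h)) :=
    hcon.2 hxm hym (div_nonneg (by linarith) hdpos.le) (div_nonneg hh hdpos.le)
      (by field_simp; rw [hd]; ring)
  have e1 : (h / d) • x + ((y - x) / d) • (y + h) = y := by
    simp only [smul_eq_mul]
    field_simp
    rw [hd]; ring
  have e2 : ((y - x) / d) • x + (h / d) • (y + h) = x + h := by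
    simp only [smul_eq_mul]
    field_simp
    rw [hd]; ring
  rw [e1] at h1; rw [e2] at h2
  simp only [smul_eq_mul] at h1 h2
  have hc1 : h / d + (y - x) / d = 1 := by field_simp; rw [hd]; ring
  have e3 : h / d * F x + (y - x) / d * F (y + h) +
      ((y - x) / d * F x + h / d * F (y + h))
      = (h / d + (y - x) / d) * (F x + F (y + h)) := by ring
  rw [hc1, one_mul] at e3
  linarith [h1, h2, e3]

lemma concave_f_min (F f : ℝ → ℝ) (hF : IsPvalueCDF F)
    (hfc : ContinuousOn f (Set.Icc (0:ℝ) 1))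
    (hac : ∀ t ∈ Set.Icc (0:ℝ) 1, F t = ∫ s in (0:ℝ)..t, f s)
    (hcon : ConcaveOn ℝ (Set.Icc (0:ℝ) 1) F) :
    ∀ t ∈ Set.Icc (0:ℝ) 1, f 1 ≤ f t := by
  intro t ht
  by_contra hlt
  push_neg at hlt
  rcases eq_or_lt_of_le ht.2 with h1eq | ht1
  · rw [h1eq] at hlt; exact lt_irrefl _ hlt
  set ε := (f 1 - f t) / 3 with hε
  have hεpos : 0 < ε := by rw [hε]; linarith
  have h1m : (1:ℝ) ∈ Set.Icc (0:ℝ) 1 := Set.right_mem_Icc.2 zero_le_one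
  obtain ⟨δ1, hδ1pos, hδ1⟩ := Metric.continuousWithinAt_iff.1 (hfc t ht) ε hεpos
  obtain ⟨δ2, hδ2pos, hδ2⟩ := Metric.continuousWithinAt_iff.1 (hfc 1 h1m) ε hεpos
  set h := min (min (δ1 / 2) (δ2 / 2)) ((1 - t) / 2) with hh
  have hhpos : 0 < h :=
    lt_min (lt_min (by linarith) (by linarith)) (by linarith)
  have hhδ1 : h < δ1 :=
    lt_of_le_of_lt (le_trans (min_le_left _ _) (min_le_left _ _)) (by linarith)
  have hhδ2 : h < δ2 :=
    lt_of_le_of_lt (le_trans (min_le_left _ _) (min_le_right _ _)) (by linarith)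
  have hht : h ≤ (1 - t) / 2 := min_le_right _ _
  have hth : t + h ≤ 1 := by linarith
  have ht0 := ht.1
  have h1h : (0:ℝ) ≤ 1 - h := by linarith
  have hthm : t + h ∈ Set.Icc (0:ℝ) 1 := ⟨by linarith, hth⟩
  have h1hm : (1:ℝ) - h ∈ Set.Icc (0:ℝ) 1 := ⟨h1h, by linarith⟩
  have hub : F (t + h) - F t ≤ (f t + ε) * h := by
    have key : ∀ x ∈ Set.Icc t (t + h), f x ≤ f t + ε := by
      intro x hx
      have hxm : x ∈ Set.Icc (0:ℝ) 1 := ⟨le_trans ht.1 hx.1, le_trans hx.2 hth⟩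
      have hdist : dist x t < δ1 := by
        rw [Real.dist_eq, abs_lt]; constructor <;> linarith [hx.1, hx.2]
      have h2 := hδ1 hxm hdist
      rw [Real.dist_eq, abs_lt] at h2
      linarith [h2.2]
    have h3 := Fub F f hfc hac ht hthm (by linarith) key
    have h4 : (f t + ε) * (t + h - t) = (f t + ε) * h := by ring
    linarith [h4 ▸ h3]
  have hlb2 : (f 1 - ε) * h ≤ F 1 - F (1 - h) := by
    have key : ∀ x ∈ Set.Icc (1 - h) 1, f 1 - ε ≤ f x := by
      intro x hx
      have hxm : x ∈ Set.Icc (0:ℝ) 1 := ⟨le_trans h1h hx.1, hx.2⟩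
      have hdist : dist x 1 < δ2 := by
        rw [Real.dist_eq, abs_lt]; constructor <;> linarith [hx.1, hx.2]
      have h2 := hδ2 hxm hdist
      rw [Real.dist_eq, abs_lt] at h2
      linarith [h2.1]
    have h3 := Flb F f hfc hac h1hm h1m (by linarith) key
    have h4 : (f 1 - ε) * (1 - (1 - h)) = (f 1 - ε) * h := by ring
    linarith [h4 ▸ h3]
  have hinc : F 1 - F (1 - h) ≤ F (t + h) - F t := by
    have h5 := concave_increment hcon ht.1 (show t ≤ 1 - h by linarith)
      hhpos.le (by linarith)
    have h6 : (1:ℝ) - h + h = 1 := by ring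
    rw [h6] at h5
    exact h5
  have hfin : f 1 - ε ≤ f t + ε :=
    le_of_mul_le_mul_right (by linarith) hhpos
  rw [hε] at hfin
  linarith

end PurityAux



/-- Proposition 3.1. If `F` is absolutely continuous (with density `f`)
and stochastically dominates `Uniform(0,1)`, then `ζ_F = 1 − inf_t F′(t)` and
`a̲ = a·ζ_F = 1 − inf_t G′(t)` where `G′ = (1−a) + a f`. If moreover `F` is concave, the
infima are achieved at `t = 1`. Furthermore, for any `b ∈ [ζ_F, 1]`,
`G = (1 − ab)U + ab F_b`, where `F_b = (F − (1−b)U)/b` is a CDF and `F ≤ F_b`. -/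
theorem purity_identifiability
    (a : ℝ) (ha : a ∈ Set.Icc (0 : ℝ) 1)
    (F f : ℝ → ℝ) (hF : IsPvalueCDF F)
    (hf0 : ∀ t ∈ Set.Icc (0 : ℝ) 1, 0 ≤ f t)
    (hfc : ContinuousOn f (Set.Icc (0 : ℝ) 1))
    (hac : ∀ t ∈ Set.Icc (0 : ℝ) 1, F t = ∫ s in (0 : ℝ)..t, f s) :
    (zeta F = 1 - sInf (f '' Set.Icc (0 : ℝ) 1)) ∧
    (a * zeta F = 1 - sInf ((fun t => (1 - a) + a * f t) '' Set.Icc (0 : ℝ) 1)) ∧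
    (ConcaveOn ℝ (Set.Icc (0 : ℝ) 1) F →
      sInf (f '' Set.Icc (0 : ℝ) 1) = f 1 ∧
      sInf ((fun t => (1 - a) + a * f t) '' Set.Icc (0 : ℝ) 1) = (1 - a) + a * f 1) ∧
    (∀ b, b ∈ Set.Icc (zeta F) 1 → 0 < b →
      IsPvalueCDF (fun t => (F t - (1 - b) * Ucdf t) / b) ∧
      (∀ t ∈ Set.Icc (0 : ℝ) 1, F t ≤ (F t - (1 - b) * Ucdf t) / b) ∧
      (∀ t, (1 - a) * Ucdf t + a * F t =
        (1 - a * b) * Ucdf t + (a * b) * ((F t - (1 - b) * Ucdf t) / b))) := by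
  have h01 : (0:ℝ) ∈ Set.Icc (0:ℝ) 1 := Set.left_mem_Icc.2 zero_le_one
  have h11 : (1:ℝ) ∈ Set.Icc (0:ℝ) 1 := Set.right_mem_Icc.2 zero_le_one
  have hne : (f '' Set.Icc (0:ℝ) 1).Nonempty := ⟨f 0, 0, h01, rfl⟩
  have hbdd : BddBelow (f '' Set.Icc (0:ℝ) 1) :=
    ⟨0, by rintro y ⟨t, ht, rfl⟩; exact hf0 t ht⟩
  set m := sInf (f '' Set.Icc (0:ℝ) 1) with hm
  have hm_le : ∀ t ∈ Set.Icc (0:ℝ) 1, m ≤ f t := fun t ht => csInf_le hbdd ⟨t, ht, rfl⟩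
  have hm0 : 0 ≤ m := le_csInf hne (by rintro y ⟨t, ht, rfl⟩; exact hf0 t ht)
  obtain ⟨u0, hu0, hfu0⟩ :
      m ∈ f '' Set.Icc (0:ℝ) 1 :=
    IsCompact.sInf_mem (isCompact_Icc.image_of_continuousOn hfc) hne
  have hF0 : F 0 = 0 := hF.2.1 0 le_rfl
  have hF1 : F 1 = 1 := hF.2.2.1 1 le_rfl
  have hm1 : m ≤ 1 := by
    have h1 := Flb F f hfc hac h01 h11 zero_le_one (fun u hu => hm_le u hu)
    rw [hF0, hF1] at h1
    linarith
  have hmemO : (1 - m) ∈ OSet F := by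
    rcases eq_or_lt_of_le hm1 with hmeq | hmlt
    · have hFU : ∀ t, F t = Ucdf t := by
        intro t
        rcases le_or_gt t 0 with htn | htp
        · rw [hF.2.1 t htn, Ucdf_of_nonpos htn]
        rcases le_or_gt 1 t with ht1 | ht1
        · rw [hF.2.2.1 t ht1, Ucdf_of_one_le ht1]
        have htm : t ∈ Set.Icc (0:ℝ) 1 := ⟨htp.le, ht1.le⟩
        have hge := hF.2.2.2 t htm
        have hle : F t ≤ t := by
          have h2 := Flb F f hfc hac (c := 1) htm h11 ht1.le
            (fun u hu => by
              have := hm_le u ⟨le_trans htm.1 hu.1, hu.2⟩; linarith)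
          rw [hF1] at h2
          linarith
        rw [Ucdf_of_mem htm]
        linarith
      refine ⟨⟨by linarith, by linarith⟩, Ucdf, Ucdf_isPvalueCDF, fun t => ?_⟩
      rw [hFU t]; ring
    · have hb0 : (0:ℝ) < 1 - m := by linarith
      refine ⟨⟨by linarith, by linarith⟩,
        fun t => (F t - (1 - (1 - m)) * Ucdf t) / (1 - m),
        Fb_isPvalueCDF F f hF hfc hac hb0 (by linarith)
          (fun u hu => by have := hm_le u hu; linarith),
        fun t => ?_⟩
      field_simp
      ring
  have hlbO : ∀ b ∈ OSet F, 1 - m ≤ b := by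
    intro b hb
    have h2 : 1 - b ≤ m :=
      le_csInf hne (by rintro y ⟨t, ht, rfl⟩; exact oset_lower F f hF hfc hac hb t ht)
    linarith
  have hzeta : zeta F = 1 - m :=
    le_antisymm (csInf_le ⟨0, fun x hx => hx.1.1⟩ hmemO)
      (le_csInf ⟨1 - m, hmemO⟩ hlbO)
  have hgne : ((fun t => (1 - a) + a * f t) '' Set.Icc (0:ℝ) 1).Nonempty :=
    ⟨_, 0, h01, rfl⟩
  have hgbdd : BddBelow ((fun t => (1 - a) + a * f t) '' Set.Icc (0:ℝ) 1) :=
    ⟨1 - a, by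
      rintro y ⟨t, ht, rfl⟩
      have := hf0 t ht
      dsimp only
      nlinarith [ha.1]⟩
  have hginf : sInf ((fun t => (1 - a) + a * f t) '' Set.Icc (0:ℝ) 1)
      = (1 - a) + a * m := by
    refine le_antisymm
      (csInf_le hgbdd ⟨u0, hu0, by show 1 - a + a * f u0 = 1 - a + a * m; rw [hfu0]⟩)
      (le_csInf hgne ?_)
    rintro y ⟨t, ht, rfl⟩
    have := hm_le t ht
    dsimp only
    nlinarith [ha.1]
  refine ⟨hzeta, ?_, ?_, ?_⟩
  · rw [hzeta, hginf]; ring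
  · intro hcon
    have hkey := concave_f_min F f hF hfc hac hcon
    have hs1 : sInf (f '' Set.Icc (0:ℝ) 1) = f 1 :=
      le_antisymm (csInf_le hbdd ⟨1, h11, rfl⟩)
        (le_csInf hne (by rintro y ⟨t, ht, rfl⟩; exact hkey t ht))
    refine ⟨hs1, ?_⟩
    refine le_antisymm (csInf_le hgbdd ⟨1, h11, rfl⟩) (le_csInf hgne ?_)
    rintro y ⟨t, ht, rfl⟩
    have := hkey t ht
    dsimp only
    nlinarith [ha.1]
  · intro b hb hbpos
    rw [hzeta] at hb
    have hb1 : b ≤ 1 := hb.2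
    have hflb : ∀ u ∈ Set.Icc (0:ℝ) 1, 1 - b ≤ f u := fun u hu =>
      le_trans (by linarith [hb.1]) (hm_le u hu)
    refine ⟨Fb_isPvalueCDF F f hF hfc hac hbpos hb1 hflb, ?_, fun t => ?_⟩
    · intro t ht
      rw [Ucdf_of_mem ht, le_div_iff₀ hbpos]
      have := hF.2.2.2 t ht
      nlinarith
    · field_simp
      ring
end
end

section
/- For any t_0 ∈ (0,1), the quantity a_0 = (G(t_0) − t_0)/(1 − t_0) satisfies 0 ≤ a_0 ≤ a̱ ≤ a ≤ 1; that is, a_0 is an identifiable lower bound on the mixing proportion a. -/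
open MeasureTheory ProbabilityTheory Filter
open scoped ENNReal NNReal Topology Classical

noncomputable section

/-- For any `t₀ ∈ (0,1)`, the quantity `a₀ = (G(t₀) − t₀)/(1 − t₀)`
satisfies `0 ≤ a₀ ≤ a̲ ≤ a ≤ 1` where `a̲ = a·ζ_F`: it is an identifiable lower
bound on the mixing proportion `a`. -/
theorem identifiable_lower_bound
    (a : ℝ) (ha : a ∈ Set.Icc (0 : ℝ) 1)
    (F : ℝ → ℝ) (hF : IsPvalueCDF F)
    (t₀ : ℝ) (ht₀ : t₀ ∈ Set.Ioo (0 : ℝ) 1) :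
    0 ≤ (Gmix a F t₀ - t₀) / (1 - t₀) ∧
    (Gmix a F t₀ - t₀) / (1 - t₀) ≤ a * zeta F ∧
    a * zeta F ≤ a ∧ a ≤ 1 := by
  obtain ⟨ha0, ha1⟩ := ha
  obtain ⟨ht0, ht1⟩ := ht₀
  obtain ⟨hFmono, hF0, hF1, hFdom⟩ := hF
  have hu : Ucdf t₀ = t₀ := by
    simp [Ucdf, min_eq_left ht1.le, max_eq_right ht0.le]
  have hden : (0 : ℝ) < 1 - t₀ := by linarith
  have hFt : t₀ ≤ F t₀ := hFdom t₀ ⟨ht0.le, ht1.le⟩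
  have hG : Gmix a F t₀ - t₀ = a * (F t₀ - t₀) := by
    simp [Gmix, hu]; ring
  have hone : (1 : ℝ) ∈ OSet F := by
    refine ⟨⟨zero_le_one, le_refl 1⟩, F, ⟨hFmono, hF0, hF1, hFdom⟩, fun t => by ring⟩
  have hne : (OSet F).Nonempty := ⟨1, hone⟩
  have hbdd : BddBelow (OSet F) := ⟨0, fun b hb => hb.1.1⟩
  -- key: (F t₀ - t₀)/(1 - t₀) is a lower bound for OSet F
  have hkey : (F t₀ - t₀) / (1 - t₀) ≤ zeta F := by
    apply le_csInf hne
    intro b hb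
    obtain ⟨⟨hb0, hb1⟩, Hc, ⟨hHmono, hH0, hH1, hHdom⟩, hFeq⟩ := hb
    have hHct : Hc t₀ ≤ 1 := by
      have := hHmono (le_of_lt ht1)
      rw [hH1 1 le_rfl] at this; exact this
    have : F t₀ - t₀ ≤ b * (1 - t₀) := by
      have := hFeq t₀
      rw [hu] at this
      nlinarith [hHdom t₀ ⟨ht0.le, ht1.le⟩]
    exact (div_le_iff₀ hden).mpr this
  have hzeta0 : 0 ≤ zeta F := le_csInf hne fun b hb => hb.1.1
  have hzeta1 : zeta F ≤ 1 := csInf_le hbdd hone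
  refine ⟨?_, ?_, ?_, ha1⟩
  · apply div_nonneg _ hden.le
    rw [hG]; exact mul_nonneg ha0 (by linarith)
  · rw [hG, mul_div_assoc]
    exact mul_le_mul_of_nonneg_left hkey ha0
  · nlinarith
end
end
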